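/- Let I be a calibrated σ-ideal on a compactum X without isolated points containing all singletons, and let f : B → Y be a Borel-measurable map from a Borel set B ⊆ X into a compactum Y. Let μ be a σ-finite nonatomic Borel measure on Y and let F_i (i ∈ ℕ) be compact subsets of Y with μ(F_i) < ∞ for each i and μ(Y \ ⋃_i F_i) = 0. Suppose G ⊆ B \ ⋃_i f⁻¹(F_i) is a nonempty G_δ subset of X such that every nonempty relatively open subset of G does not belong to I and the restriction f|G is continuous. Then for every nonempty relatively open subset U of G and every ε > 0 there exist compact sets L ⊆ cl(U) and M ⊆ cl(f(U)) (closures in X and in Y respectively) such that: L is boundary in cl(U) and L ∉ I; μ(M) < ε; and L ⊆ f̌_U[M]. -/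

import Mathlib

open MeasureTheory Topology Filter Set ENNReal

/-- A σ-ideal of Borel sets: closed under Borel subsets and countable unions. -/
def SigmaIdeal {X : Type*} [TopologicalSpace X] [MeasurableSpace X]
    (I : Set (Set X)) : Prop :=
  (∀ A ∈ I, MeasurableSet A) ∧
  (∀ A ∈ I, ∀ B : Set X, MeasurableSet B → B ⊆ A → B ∈ I) ∧
  (∀ A : ℕ → Set X, (∀ n, A n ∈ I) → (⋃ n, A n) ∈ I)

/-- `I` is generated by compact sets. -/
def GenByCompacts {X : Type*} [TopologicalSpace X] (I : Set (Set X)) : Prop :=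
  ∀ A ∈ I, ∃ S : ℕ → Set X, (∀ n, IsCompact (S n)) ∧ (⋃ n, S n) ∈ I ∧ A ⊆ ⋃ n, S n

/-- A calibrated σ-ideal. -/
def Calibrated {X : Type*} [TopologicalSpace X] [MeasurableSpace X]
    (I : Set (Set X)) : Prop :=
  SigmaIdeal I ∧ GenByCompacts I ∧
    ∀ K : Set X, IsCompact K → K ∉ I →
      ∀ Kn : ℕ → Set X, (∀ n, IsCompact (Kn n) ∧ Kn n ∈ I) →
        ∃ L : Set X, IsCompact L ∧ L ⊆ K \ (⋃ n, Kn n) ∧ L ∉ I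

/-- The compact-valued map `f̌_U`: `x ∈ f̌_U(y)` iff there is a sequence `(xₙ)` in `U`
with `xₙ → x` and `f(xₙ) → y`. -/
def fCheck {X Y : Type*} [TopologicalSpace X] [TopologicalSpace Y]
    (f : X → Y) (U : Set X) (y : Y) : Set X :=
  {x | ∃ u : ℕ → X, (∀ n, u n ∈ U) ∧ Tendsto u atTop (nhds x) ∧
    Tendsto (fun n => f (u n)) atTop (nhds y)}

/-- `f̌_U[M] = ⋃_{y ∈ M} f̌_U(y)`. -/
def fCheckImage {X Y : Type*} [TopologicalSpace X] [TopologicalSpace Y]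
    (f : X → Y) (U : Set X) (M : Set Y) : Set X :=
  ⋃ y ∈ M, fCheck f U y

/-- `L` is boundary in `F`: `L ⊆ F` and `L` has empty interior in the subspace
topology of `F`. -/
def BoundaryIn {X : Type*} [TopologicalSpace X] (L F : Set X) : Prop :=
  L ⊆ F ∧ ∀ W : Set X, IsOpen W → (W ∩ F).Nonempty → ¬ (W ∩ F ⊆ L)

/-- Claim 5.1 (the key claim in the proof of Theorem 1.1(iii)). -/
theorem statement6 {X Y : Type*}
    [MetricSpace X] [CompactSpace X] [Nonempty X] [MeasurableSpace X] [BorelSpace X]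
    [MetricSpace Y] [CompactSpace Y] [Nonempty Y] [MeasurableSpace Y] [BorelSpace Y]
    (hX : ∀ x : X, ¬ IsOpen ({x} : Set X))
    (I : Set (Set X)) (hI : Calibrated I) (hsing : ∀ x : X, {x} ∈ I)
    (B : Set X) (hB : MeasurableSet B)
    (f : X → Y) (hf : Measurable fun x : B => f x.1)
    -- the measure μ and the compacta Fᵢ:
    (μ : Measure Y) [SigmaFinite μ] (hμna : ∀ y : Y, μ {y} = 0)
    (F : ℕ → Set Y) (hFc : ∀ i, IsCompact (F i)) (hFfin : ∀ i, μ (F i) < ⊤)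
    (hFco : μ (Set.univ \ ⋃ i, F i) = 0)
    -- the set G:
    (G : Set X) (hGB : G ⊆ B \ ⋃ i, {x ∈ B | f x ∈ F i})
    (hGδ : IsGδ G) (hGne : G.Nonempty)
    (hGI : ∀ W : Set X, IsOpen W → (W ∩ G).Nonempty → W ∩ G ∉ I)
    (hfG : ContinuousOn f G) :
    ∀ U : Set X, U.Nonempty → (∃ W : Set X, IsOpen W ∧ U = W ∩ G) →
      ∀ ε : ℝ≥0∞, 0 < ε →
        ∃ L : Set X, ∃ M : Set Y,
          IsCompact L ∧ L ⊆ closure U ∧ IsCompact M ∧ M ⊆ closure (f '' U) ∧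
          BoundaryIn L (closure U) ∧ L ∉ I ∧
          μ M < ε ∧
          L ⊆ fCheckImage f U M := by
  classical
  intro U hUne hUrel ε hε
  obtain ⟨W, hWo, hUW⟩ := hUrel
  -- the radii
  set r : ℕ → ℝ := fun n => 1 / ((n : ℝ) + 1) with hrdef
  have hrvals : ∀ n : ℕ, r n = 1 / ((n : ℝ) + 1) := fun n => by rw [hrdef]
  have hrpos : ∀ n, 0 < r n := fun n => by rw [hrvals]; positivity
  have hr0 : Tendsto r atTop (𝓝 0) := by
    rw [hrdef]; exact tendsto_one_div_add_atTop_nhds_zero_nat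
  have hranti : ∀ m n : ℕ, m ≤ n → r n ≤ r m := by
    intro m n hmn
    rw [hrvals, hrvals]
    apply one_div_le_one_div_of_le (by positivity)
    have : (m : ℝ) ≤ (n : ℝ) := Nat.cast_le.2 hmn
    linarith
  have hrlt : ∀ δ : ℝ, 0 < δ → ∃ n, r n < δ := by
    intro δ hδ
    obtain ⟨n, hn⟩ := exists_nat_one_div_lt hδ
    exact ⟨n, by rw [hrvals]; exact hn⟩
  -- the cluster-value multifunction
  set Γ : X → Set Y := fun x => ⋂ n : ℕ, closure (f '' (U ∩ Metric.ball x (r n))) with hΓdef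
  have hΓmem : ∀ x y, y ∈ Γ x ↔ ∀ n : ℕ, y ∈ closure (f '' (U ∩ Metric.ball x (r n))) := by
    intro x y; rw [hΓdef]; exact mem_iInter
  have hΓδ : ∀ x y, y ∈ Γ x → ∀ δ : ℝ, 0 < δ → y ∈ closure (f '' (U ∩ Metric.ball x δ)) := by
    intro x y hy δ hδ
    obtain ⟨n, hn⟩ := hrlt δ hδ
    exact closure_mono (image_mono (inter_subset_inter_right _
      (Metric.ball_subset_ball hn.le))) ((hΓmem x y).1 hy n)
  have hΓC : ∀ x, Γ x ⊆ closure (f '' U) := by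
    intro x y hy
    exact closure_mono (image_mono inter_subset_left) ((hΓmem x y).1 hy 0)
  have hΓne : ∀ x, x ∈ closure U → (Γ x).Nonempty := by
    intro x hx
    rw [hΓdef]
    apply IsCompact.nonempty_iInter_of_sequence_nonempty_isCompact_isClosed
    · intro n
      exact closure_mono (image_mono (inter_subset_inter_right _
        (Metric.ball_subset_ball (hranti n (n + 1) (Nat.le_succ n)))))
    · intro n
      obtain ⟨z, hzU, hzd⟩ := Metric.mem_closure_iff.1 hx (r n) (hrpos n)
      exact ⟨f z, subset_closure ⟨z, ⟨hzU, by rw [Metric.mem_ball, dist_comm]; exact hzd⟩, rfl⟩⟩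
    · exact isClosed_closure.isCompact
    · exact fun n => isClosed_closure
  have hfCheck : ∀ x y, y ∈ Γ x → x ∈ fCheck f U y := by
    intro x y hy
    have h : ∀ n : ℕ, ∃ p, p ∈ U ∧ dist p x < r n ∧ dist y (f p) < r n := by
      intro n
      obtain ⟨z, hz, hzd⟩ := Metric.mem_closure_iff.1 ((hΓmem x y).1 hy n) (r n) (hrpos n)
      obtain ⟨p, ⟨hpU, hpb⟩, rfl⟩ := hz
      exact ⟨p, hpU, Metric.mem_ball.1 hpb, hzd⟩
    choose u hu1 hu2 hu3 using h
    refine ⟨u, hu1, ?_, ?_⟩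
    · exact tendsto_iff_dist_tendsto_zero.2
        (squeeze_zero (fun n => dist_nonneg) (fun n => (hu2 n).le) hr0)
    · refine tendsto_iff_dist_tendsto_zero.2
        (squeeze_zero (fun n => dist_nonneg) (fun n => ?_) hr0)
      rw [dist_comm]; exact (hu3 n).le
  have gclosed : ∀ (u : ℕ → X) (v : ℕ → Y) (x : X) (y : Y),
      (∀ k, v k ∈ Γ (u k)) → Tendsto u atTop (𝓝 x) → Tendsto v atTop (𝓝 y) → y ∈ Γ x := by
    intro u v x y hv hu hvy
    refine (hΓmem x y).2 fun n => ?_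
    refine isClosed_closure.mem_of_tendsto hvy ?_
    have hd : Tendsto (fun k => dist (u k) x) atTop (𝓝 0) := tendsto_iff_dist_tendsto_zero.1 hu
    filter_upwards [hd.eventually_lt_const (hrpos n)] with k hk
    obtain ⟨m, hm⟩ := hrlt (r n - dist (u k) x) (sub_pos.2 hk)
    have hball : Metric.ball (u k) (r m) ⊆ Metric.ball x (r n) :=
      Metric.ball_subset_ball' (by linarith)
    exact closure_mono (image_mono (inter_subset_inter_right _ hball))
      (hΓδ (u k) (v k) (hv k) (r m) (hrpos m))
  have hAclosed : ∀ T : Set Y, IsCompact T →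
      IsClosed {x : X | x ∈ closure U ∧ (Γ x ∩ T).Nonempty} := by
    intro T hT
    apply IsSeqClosed.isClosed
    intro u x hu hux
    refine ⟨isClosed_closure.mem_of_tendsto hux (Eventually.of_forall fun n => (hu n).1), ?_⟩
    have h2 : ∀ n, ∃ z, z ∈ Γ (u n) ∧ z ∈ T := fun n => (hu n).2.imp fun z hz => ⟨hz.1, hz.2⟩
    choose v hvΓ hvT using h2
    obtain ⟨y, hyT, φ, hφ, hvφ⟩ := hT.tendsto_subseq hvT
    exact ⟨y, gclosed (u ∘ φ) (v ∘ φ) x y (fun k => hvΓ (φ k)) (hux.comp hφ.tendsto_atTop) hvφ, hyT⟩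
  -- basic facts about U and the ideal
  have hUmeas : MeasurableSet U := by
    rw [hUW]; exact hWo.measurableSet.inter hGδ.measurableSet
  have hUI : U ∉ I := by
    rw [hUW]; exact hGI W hWo (hUW ▸ hUne)
  have hclUc : IsCompact (closure U) := isClosed_closure.isCompact
  have hclUI : closure U ∉ I := fun h => hUI (hI.1.2.1 _ h U hUmeas subset_closure)
  have hemptyI : (∅ : Set X) ∈ I := by
    obtain ⟨x0⟩ := (inferInstance : Nonempty X)
    exact hI.1.2.1 _ (hsing x0) ∅ MeasurableSet.empty (empty_subset _)
  -- a countable dense subset of `closure U`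
  have hTB : ∀ n : ℕ, ∃ t : Finset X, (∀ z ∈ t, z ∈ closure U) ∧
      closure U ⊆ ⋃ z ∈ t, Metric.ball z (r n) :=
    fun n => hclUc.elim_nhds_subcover (fun z => Metric.ball z (r n))
      (fun z _ => Metric.ball_mem_nhds z (hrpos n))
  choose T hT1 hT2 using hTB
  have hccount : (⋃ n, (T n : Set X)).Countable := countable_iUnion fun n => (T n).countable_toSet
  have hclUne : (closure U).Nonempty := hUne.closure
  have hcne : (⋃ n, (T n : Set X)).Nonempty := by
    obtain ⟨z, hz⟩ := hclUne
    have h := hT2 0 hz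
    rw [mem_iUnion₂] at h
    obtain ⟨w, hw, -⟩ := h
    exact ⟨w, mem_iUnion.2 ⟨0, hw⟩⟩
  obtain ⟨g, hg⟩ := hccount.exists_eq_range hcne
  have hgclU : ∀ m, g m ∈ closure U := by
    intro m
    have h : g m ∈ ⋃ n, (T n : Set X) := hg ▸ mem_range_self m
    obtain ⟨n, hn⟩ := mem_iUnion.1 h
    exact hT1 n _ hn
  have hgdense : ∀ z ∈ closure U, ∀ δ : ℝ, 0 < δ → ∃ m, dist (g m) z < δ := by
    intro z hz δ hδ
    obtain ⟨n, hn⟩ := hrlt δ hδ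
    have h := hT2 n hz
    rw [mem_iUnion₂] at h
    obtain ⟨w, hw, hwball⟩ := h
    have hwc : w ∈ ⋃ n, (T n : Set X) := mem_iUnion.2 ⟨n, hw⟩
    rw [hg] at hwc
    obtain ⟨m, rfl⟩ := hwc
    exact ⟨m, by rw [dist_comm]; exact lt_trans (Metric.mem_ball.1 hwball) hn⟩
  have hbdry : ∀ L : Set X, L ⊆ closure U → (∀ m, g m ∉ L) → BoundaryIn L (closure U) := by
    intro L hLsub hLg
    refine ⟨hLsub, ?_⟩
    rintro Wo hWoo ⟨z, hzW, hzcl⟩ hsub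
    obtain ⟨δ, hδ, hball⟩ := Metric.isOpen_iff.1 hWoo z hzW
    obtain ⟨m, hm⟩ := hgdense z hzcl δ hδ
    exact hLg m (hsub ⟨hball (Metric.mem_ball.2 hm), hgclU m⟩)
  -- small closed balls around points of the F i
  have hrad : ∀ (i : ℕ) (y : Y), ∃ ρ : ℝ, 0 < ρ ∧ μ (F i ∩ Metric.closedBall y ρ) < ε := by
    intro i y
    have hmeasb : ∀ n : ℕ, NullMeasurableSet (F i ∩ Metric.closedBall y (r n)) μ :=
      fun n => ((hFc i).isClosed.measurableSet.inter measurableSet_closedBall).nullMeasurableSet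
    have hanti : Antitone (fun n : ℕ => F i ∩ Metric.closedBall y (r n)) := fun m n hmn =>
      inter_subset_inter_right _ (Metric.closedBall_subset_closedBall (hranti m n hmn))
    have hfin : ∃ n : ℕ, μ (F i ∩ Metric.closedBall y (r n)) ≠ ∞ :=
      ⟨0, ((measure_mono inter_subset_left).trans_lt (hFfin i)).ne⟩
    have htend := tendsto_measure_iInter_atTop (μ := μ) hmeasb hanti hfin
    have hiInter : ⋂ n : ℕ, (F i ∩ Metric.closedBall y (r n)) = F i ∩ {y} := by
      apply subset_antisymm
      · intro z hz
        have hz0 := mem_iInter.1 hz 0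
        refine ⟨hz0.1, ?_⟩
        have hd : ∀ n, dist z y ≤ r n := fun n => (mem_iInter.1 hz n).2
        have hle : dist z y ≤ 0 := by
          by_contra hpos
          push_neg at hpos
          obtain ⟨n, hn⟩ := hrlt (dist z y) hpos
          exact absurd (hd n) (not_le.2 hn)
        have : z = y := by
          have := dist_le_zero.1 hle
          exact this
        rw [this]; exact rfl
      · intro z hz
        refine mem_iInter.2 fun n => ⟨hz.1, ?_⟩
        have hzy : z = y := hz.2
        rw [hzy]
        exact Metric.mem_closedBall_self (hrpos n).le
    rw [hiInter] at htend
    have h0 : μ (F i ∩ {y}) = 0 :=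
      le_antisymm ((measure_mono inter_subset_right).trans (hμna y).le) zero_le
    rw [h0] at htend
    obtain ⟨n, hn⟩ := (htend.eventually_lt_const hε).exists
    exact ⟨r n, hrpos n, hn⟩
  choose ρ hρpos hρμ using hrad
  have hcov : ∀ i, ∃ t : Finset Y, (∀ y ∈ t, y ∈ F i) ∧
      F i ⊆ ⋃ y ∈ t, Metric.ball y (ρ i y) :=
    fun i => (hFc i).elim_nhds_subcover _ (fun y _ => Metric.ball_mem_nhds y (hρpos i y))
  choose t ht1 ht2 using hcov
  set A : ℕ → Y → Set X := fun i y =>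
    {x : X | x ∈ closure U ∧ (Γ x ∩ (F i ∩ Metric.closedBall y (ρ i y))).Nonempty} with hAdef
  have hAcomp : ∀ i y, IsCompact (A i y) := by
    intro i y
    have h := hAclosed (F i ∩ Metric.closedBall y (ρ i y))
      ((hFc i).inter_right Metric.isClosed_closedBall)
    rw [hAdef]
    exact h.isCompact
  by_cases hcase : ∃ i, ∃ y ∈ t i, A i y ∉ I
  · -- Case 1 : some A i y is I-positive
    obtain ⟨i, y, hyt, hAI⟩ := hcase
    obtain ⟨L, hLc, hLsub, hLI⟩ := hI.2.2 (A i y) (hAcomp i y) hAI (fun n => {g n})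
      (fun n => ⟨isCompact_singleton, hsing _⟩)
    have hLA : ∀ x ∈ L, x ∈ A i y := fun x hx => (hLsub hx).1
    have hLclU : L ⊆ closure U := by
      intro x hx
      have h := hLA x hx
      rw [hAdef] at h
      exact h.1
    have hgL : ∀ m, g m ∉ L := fun m hmL => (hLsub hmL).2 (mem_iUnion.2 ⟨m, rfl⟩)
    refine ⟨L, F i ∩ Metric.closedBall y (ρ i y) ∩ closure (f '' U), hLc, hLclU,
      ((hFc i).inter_right Metric.isClosed_closedBall).inter_right isClosed_closure,
      inter_subset_right, hbdry L hLclU hgL, hLI,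
      (measure_mono inter_subset_left).trans_lt (hρμ i y), ?_⟩
    intro x hx
    have h := hLA x hx
    rw [hAdef] at h
    obtain ⟨y', hy'Γ, hy'F⟩ := h.2
    exact mem_biUnion ⟨hy'F, hΓC x hy'Γ⟩ (hfCheck x y' hy'Γ)
  · -- Case 2 : all A i y (y ∈ t i) are in I
    push_neg at hcase
    have hSc' : ((⋃ i : ℕ, (fun y => A i y) '' (t i : Set Y)) ∪ {(∅ : Set X)}).Countable :=
      (countable_iUnion fun i => ((t i).countable_toSet.image _)).union (countable_singleton _)
    have hSne : ((⋃ i : ℕ, (fun y => A i y) '' (t i : Set Y)) ∪ {(∅ : Set X)}).Nonempty :=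
      ⟨∅, Or.inr rfl⟩
    obtain ⟨e, he⟩ := hSc'.exists_eq_range hSne
    have hemem : ∀ n, IsCompact (e n) ∧ e n ∈ I := by
      intro n
      have h : e n ∈ (⋃ i : ℕ, (fun y => A i y) '' (t i : Set Y)) ∪ {(∅ : Set X)} :=
        he ▸ mem_range_self n
      rcases h with h | h
      · obtain ⟨i, hi⟩ := mem_iUnion.1 h
        obtain ⟨y, hyt, hAeq⟩ := hi
        rw [← hAeq]
        exact ⟨hAcomp i y, hcase i y hyt⟩
      · rw [mem_singleton_iff.1 h]
        exact ⟨isCompact_empty, hemptyI⟩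
    set K' : ℕ → Set X := fun n => if n % 2 = 0 then e (n / 2) else {g (n / 2)} with hK'def
    have hK'c : ∀ n, IsCompact (K' n) ∧ K' n ∈ I := by
      intro n
      simp only [hK'def]
      by_cases h : n % 2 = 0
      · rw [if_pos h]; exact hemem _
      · rw [if_neg h]; exact ⟨isCompact_singleton, hsing _⟩
    obtain ⟨L, hLc, hLsub, hLI⟩ := hI.2.2 (closure U) hclUc hclUI K' hK'c
    have hLclU : L ⊆ closure U := fun x hx => (hLsub hx).1
    have hLavoid : ∀ n, ∀ x ∈ L, x ∉ K' n :=
      fun n x hx hmem => (hLsub hx).2 (mem_iUnion.2 ⟨n, hmem⟩)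
    have hgL : ∀ m, g m ∉ L := by
      intro m hmL
      apply hLavoid (2 * m + 1) _ hmL
      simp only [hK'def]
      have h1 : (2 * m + 1) % 2 ≠ 0 := by omega
      have h2 : (2 * m + 1) / 2 = m := by omega
      rw [if_neg h1, h2]
      exact rfl
    have hAavoid : ∀ i, ∀ y ∈ t i, ∀ x ∈ L, x ∉ A i y := by
      intro i y hyt x hx hxA
      have hmem : A i y ∈ (⋃ i : ℕ, (fun y => A i y) '' (t i : Set Y)) ∪ {(∅ : Set X)} :=
        Or.inl (mem_iUnion.2 ⟨i, mem_image_of_mem _ hyt⟩)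
      rw [he] at hmem
      obtain ⟨n, hn⟩ := hmem
      apply hLavoid (2 * n) x hx
      simp only [hK'def]
      have h1 : (2 * n) % 2 = 0 := by omega
      have h2 : (2 * n) / 2 = n := by omega
      rw [if_pos h1, h2, hn]
      exact hxA
    have hΓavoidF : ∀ x ∈ L, ∀ i : ℕ, ∀ y' ∈ Γ x, y' ∉ F i := by
      intro x hx i y' hy'Γ hy'F
      have h := ht2 i hy'F
      rw [mem_iUnion₂] at h
      obtain ⟨y, hyt, hyb⟩ := h
      refine hAavoid i y hyt x hx ?_
      rw [hAdef]
      exact ⟨hLclU hx, ⟨y', hy'Γ, ⟨hy'F, Metric.ball_subset_closedBall hyb⟩⟩⟩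
    set M : Set Y := {y' | ∃ x ∈ L, y' ∈ Γ x} with hMdef
    have hMclosed : IsClosed M := by
      apply IsSeqClosed.isClosed
      intro v y' hv hvy
      have h2 : ∀ n, ∃ z, z ∈ L ∧ v n ∈ Γ z := fun n => (hv n).imp fun z hz => ⟨hz.1, hz.2⟩
      choose xs hxsL hxsΓ using h2
      obtain ⟨x, hxL, φ, hφ, hxφ⟩ := hLc.tendsto_subseq hxsL
      exact ⟨x, hxL, gclosed (xs ∘ φ) (v ∘ φ) x y' (fun k => hxsΓ (φ k)) hxφ
        (hvy.comp hφ.tendsto_atTop)⟩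
    have hMC : M ⊆ closure (f '' U) := by
      rintro y' ⟨x, -, hy'⟩
      exact hΓC x hy'
    refine ⟨L, M, hLc, hLclU, hMclosed.isCompact, hMC, hbdry L hLclU hgL, hLI, ?_, ?_⟩
    · have hsub : M ⊆ Set.univ \ ⋃ i, F i := by
        rintro y' ⟨x, hxL, hy'⟩
        refine ⟨trivial, fun hmem => ?_⟩
        obtain ⟨i, hi⟩ := mem_iUnion.1 hmem
        exact hΓavoidF x hxL i y' hy' hi
      exact ((measure_mono hsub).trans hFco.le).trans_lt hε
    · intro x hx
      obtain ⟨y', hy'⟩ := hΓne x (hLclU hx)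
      exact mem_biUnion ⟨x, hx, hy'⟩ (hfCheck x y' hy')
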